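/- Let {q_k} be a sequence of generalized quadratic forms on ℝⁿ epi-converging to q, and suppose there is r ≥ 0 with q_k(w) ≥ −r‖w‖² for all w ∈ ℝⁿ and all sufficiently large k. Then q is a generalized quadratic form and q(w) ≥ −r‖w‖² for all w ∈ ℝⁿ. -/

import Mathlib

open Filter Topology
open scoped RealInnerProductSpace

variable {n : ℕ}

/-- A generalized quadratic form on `ℝⁿ`: `q = (1/2)⟪·, A·⟫ + δ_L` with `A` symmetric and
`L` a linear subspace. -/
def IsGenQuadForm (q : EuclideanSpace ℝ (Fin n) → EReal) : Prop :=
  ∃ (A : EuclideanSpace ℝ (Fin n) →L[ℝ] EuclideanSpace ℝ (Fin n))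
    (L : Submodule ℝ (EuclideanSpace ℝ (Fin n))),
    (∀ x y, ⟪A x, y⟫ = ⟪x, A y⟫) ∧
    (∀ w ∈ L, q w = ((1 / 2 * ⟪w, A w⟫ : ℝ) : EReal)) ∧
    (∀ w ∉ L, q w = ⊤)

/-- Epi-convergence of a sequence of extended-real-valued functions. -/
def EpiConverges (q : ℕ → EuclideanSpace ℝ (Fin n) → EReal)
    (ql : EuclideanSpace ℝ (Fin n) → EReal) : Prop :=
  (∀ (x : EuclideanSpace ℝ (Fin n)) (xs : ℕ → EuclideanSpace ℝ (Fin n)),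
      Tendsto xs atTop (𝓝 x) → ql x ≤ Filter.liminf (fun k => q k (xs k)) atTop) ∧
  (∀ x : EuclideanSpace ℝ (Fin n), ∃ xs : ℕ → EuclideanSpace ℝ (Fin n),
      Tendsto xs atTop (𝓝 x) ∧ Filter.limsup (fun k => q k (xs k)) atTop ≤ ql x)


/-- An additive function `ℝ → ℝ` bounded below on `[0,1]` is linear. -/
theorem additive_bddBelow_linear (g : ℝ → ℝ) (hadd : ∀ s t, g (s + t) = g s + g t)
    (c : ℝ) (hc : ∀ t ∈ Set.Icc (0:ℝ) 1, c ≤ g t) : ∀ t, g t = t * g 1 := by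
  set h : ℝ → ℝ := fun t => g t - t * g 1 with hh
  have hadd' : ∀ s t, h (s + t) = h s + h t := by
    intro s t; simp only [hh]; rw [hadd]; ring
  have h0 : g 0 = 0 := by have := hadd 0 0; simpa using this.symm
  have h1 : h 1 = 0 := by simp [hh]
  have hint : ∀ m : ℤ, h m = 0 := by
    have hn : ∀ m : ℕ, h m = 0 := by
      intro m; induction m with
      | zero => simp [hh, h0]
      | succ k ih => push_cast; rw [hadd', ih, h1]; ring
    intro m
    rcases m with m | m
    · exact_mod_cast hn m
    · have : h (-(m+1) : ℝ) + h (m+1 : ℝ) = 0 := by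
        rw [← hadd']
        have : (-(m+1) : ℝ) + (m+1 : ℝ) = 0 := by ring
        rw [this]; simp [hh, h0]
      have h2 := hn (m+1)
      push_cast at h2 ⊢
      linarith
  have hlb : ∀ t ∈ Set.Icc (0:ℝ) 1, c - |g 1| ≤ h t := by
    intro t ht
    have := hc t ht
    have h3 : t * g 1 ≤ |g 1| := by
      rcases ht with ⟨h4, h5⟩
      rcases le_or_gt (g 1) 0 with h6 | h6
      · nlinarith [abs_nonneg (g 1)]
      · nlinarith [le_abs_self (g 1)]
    simp only [hh]; linarith
  have hub : ∀ t ∈ Set.Icc (0:ℝ) 1, h t ≤ -(c - |g 1|) := by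
    intro t ht
    have h4 : h t + h (1 - t) = 0 := by rw [← hadd']; norm_num [h1]
    have h5 := hlb (1 - t) ⟨by linarith [ht.2], by linarith [ht.1]⟩
    linarith
  -- h is bounded on [0,1]; h(t + m) = h t for integers m; h(n t) = n h t
  have hper : ∀ (t : ℝ) (m : ℤ), h (t + m) = h t := by
    intro t m; rw [hadd', hint]; ring
  have hnat : ∀ (m : ℕ) (t : ℝ), h (m * t) = m * h t := by
    intro m; induction m with
    | zero => intro t; simp [hh, h0]
    | succ k ih => intro t; push_cast; rw [add_mul, one_mul, hadd', ih]; ring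
  intro t
  by_contra hne
  have hht : h t ≠ 0 := by simp only [hh]; intro h'; apply hne; linarith [sub_eq_zero.mp h']
  set C := -(c - |g 1|) with hC
  have hCnn : ∀ t' ∈ Set.Icc (0:ℝ) 1, |h t'| ≤ C := by
    intro t' ht'; rw [abs_le]; exact ⟨by linarith [hlb t' ht'], hub t' ht'⟩
  obtain ⟨m, hm⟩ := exists_nat_gt (C / |h t|)
  have hmpos : (0:ℝ) < |h t| := abs_pos.mpr hht
  have key : |h (m * t)| ≤ C := by
    have : h (m * t) = h (Int.fract (m * t)) := by
      rw [← hper (Int.fract (m*t)) ⌊(m:ℝ) * t⌋, Int.fract_add_floor]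
    rw [this]
    exact hCnn _ ⟨Int.fract_nonneg _, le_of_lt (Int.fract_lt_one _)⟩
  rw [hnat, abs_mul, abs_of_nonneg (Nat.cast_nonneg m)] at key
  have : C / |h t| < m := hm
  rw [div_lt_iff₀ hmpos] at this
  linarith

local notation "E" => EuclideanSpace ℝ (Fin n)

set_option maxHeartbeats 1000000 in
theorem quad_of_parallelogram (S : Submodule ℝ (EuclideanSpace ℝ (Fin n)))
    (Q : EuclideanSpace ℝ (Fin n) → ℝ)
    (hpar : ∀ w ∈ S, ∀ z ∈ S, Q (w + z) + Q (w - z) = 2 * Q w + 2 * Q z)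
    (hhom : ∀ (c : ℝ), ∀ w ∈ S, Q (c • w) = c ^ 2 * Q w)
    (r : ℝ) (hr : 0 ≤ r) (hlb : ∀ w ∈ S, -r * ‖w‖ ^ 2 ≤ Q w) :
    ∃ A : EuclideanSpace ℝ (Fin n) →L[ℝ] EuclideanSpace ℝ (Fin n),
      (∀ x y, ⟪A x, y⟫ = ⟪x, A y⟫) ∧ ∀ w ∈ S, Q w = 1 / 2 * ⟪w, A w⟫ := by
  have hQ0 : Q 0 = 0 := by
    have := hhom 0 0 S.zero_mem
    simpa using this
  have hneg : ∀ w ∈ S, Q (-w) = Q w := by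
    intro w hw
    have := hhom (-1) w hw
    simpa using this
  set B : E → E → ℝ := fun x y => (Q (x + y) - Q (x - y)) / 4 with hB
  have hBsymm : ∀ x ∈ S, ∀ y ∈ S, B x y = B y x := by
    intro x hx y hy
    have h1 : Q (y - x) = Q (x - y) := by
      rw [← neg_sub x y, hneg _ (S.sub_mem hx hy)]
    simp only [hB]
    rw [add_comm y x, h1]
  have hB0 : ∀ y ∈ S, B 0 y = 0 := by
    intro y hy
    simp only [hB, zero_add, zero_sub, hneg y hy]
    ring
  have hkey : ∀ x ∈ S, ∀ y ∈ S, ∀ z ∈ S,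
      B x z + B y z = 2 * B ((1/2 : ℝ) • (x + y)) z := by
    intro x hx y hy z hz
    have hu : (1/2 : ℝ) • (x + y) + z ∈ S := S.add_mem (S.smul_mem _ (S.add_mem hx hy)) hz
    have hu' : (1/2 : ℝ) • (x + y) - z ∈ S := S.sub_mem (S.smul_mem _ (S.add_mem hx hy)) hz
    have hv : (1/2 : ℝ) • (x - y) ∈ S := S.smul_mem _ (S.sub_mem hx hy)
    have e1 := hpar _ hu _ hv
    have e2 := hpar _ hu' _ hv
    have id1 : (1/2 : ℝ) • (x + y) + z + (1/2 : ℝ) • (x - y) = x + z := by module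
    have id2 : (1/2 : ℝ) • (x + y) + z - (1/2 : ℝ) • (x - y) = y + z := by module
    have id3 : (1/2 : ℝ) • (x + y) - z + (1/2 : ℝ) • (x - y) = x - z := by module
    have id4 : (1/2 : ℝ) • (x + y) - z - (1/2 : ℝ) • (x - y) = y - z := by module
    rw [id1, id2] at e1
    rw [id3, id4] at e2
    simp only [hB]
    linarith
  have hhalf : ∀ x ∈ S, ∀ z ∈ S, B x z = 2 * B ((1/2 : ℝ) • x) z := by
    intro x hx z hz
    have := hkey x hx 0 S.zero_mem z hz
    rw [hB0 z hz, add_zero] at this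
    rw [this, add_zero]
  have hBadd : ∀ x ∈ S, ∀ y ∈ S, ∀ z ∈ S, B (x + y) z = B x z + B y z := by
    intro x hx y hy z hz
    rw [hkey x hx y hy z hz, ← hhalf (x + y) (S.add_mem hx hy) z hz]
  have hBsmul : ∀ (t : ℝ), ∀ x ∈ S, ∀ z ∈ S, B (t • x) z = t * B x z := by
    intro t x hx z hz
    set g : ℝ → ℝ := fun s => B (s • x) z with hg
    have hgadd : ∀ s t : ℝ, g (s + t) = g s + g t := by
      intro s t
      simp only [hg, add_smul]
      exact hBadd _ (S.smul_mem _ hx) _ (S.smul_mem _ hx) z hz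
    have hbound : ∀ s ∈ Set.Icc (0:ℝ) 1,
        (-r * (‖x‖ + ‖z‖)^2 - 2 * |Q x| - 2 * Q z - r * (‖x‖ + ‖z‖)^2) / 4 ≤ g s := by
      intro s hs
      have hs0 := hs.1
      have hs1 := hs.2
      have hmem : s • x + z ∈ S := S.add_mem (S.smul_mem _ hx) hz
      have hnorm : ‖s • x + z‖ ≤ ‖x‖ + ‖z‖ := by
        calc ‖s • x + z‖ ≤ ‖s • x‖ + ‖z‖ := norm_add_le _ _
        _ ≤ ‖x‖ + ‖z‖ := by
            rw [norm_smul, Real.norm_eq_abs, abs_of_nonneg hs0]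
            nlinarith [norm_nonneg x]
      have hlb1 : -r * (‖x‖ + ‖z‖)^2 ≤ Q (s • x + z) := by
        have h5 := hlb _ hmem
        have h6 : ‖s • x + z‖^2 ≤ (‖x‖ + ‖z‖)^2 := by
          nlinarith [norm_nonneg (s • x + z)]
        nlinarith
      have hub1 : Q (s • x - z) ≤ 2 * |Q x| + 2 * Q z + r * (‖x‖ + ‖z‖)^2 := by
        have hp := hpar _ (S.smul_mem s hx) _ hz
        rw [hhom s x hx] at hp
        have h2 : 2 * s^2 * Q x ≤ 2 * |Q x| := by
          have h7 : s^2 ≤ 1 := by nlinarith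
          nlinarith [abs_nonneg (Q x), le_abs_self (Q x), neg_abs_le (Q x), sq_nonneg s]
        linarith
      simp only [hg, hB]
      linarith
    have := additive_bddBelow_linear g hgadd _ hbound t
    simp only [hg, one_smul] at this
    exact this
  have hBdiag : ∀ x ∈ S, B x x = Q x := by
    intro x hx
    have h2 : x + x = (2:ℝ) • x := (two_smul ℝ x).symm
    simp only [hB]
    rw [h2, hhom 2 x hx, sub_self, hQ0]
    ring
  -- build the bilinear map via orthogonal projection
  haveI : CompleteSpace S := FiniteDimensional.complete ℝ S
  set P : E →L[ℝ] S := S.orthogonalProjectionOnto with hP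
  set φ : E →ₗ[ℝ] E →ₗ[ℝ] ℝ := LinearMap.mk₂ ℝ (fun x y => 2 * B (P x : E) (P y : E))
    (by intro x₁ x₂ y
        simp only [map_add, Submodule.coe_add]
        rw [hBadd _ (P x₁).2 _ (P x₂).2 _ (P y).2]; ring)
    (by intro c x y
        simp only [map_smul, SetLike.val_smul]
        rw [hBsmul c _ (P x).2 _ (P y).2]; simp [smul_eq_mul]; ring)
    (by intro x y₁ y₂
        simp only [map_add, Submodule.coe_add]
        rw [hBsymm _ (P x).2 _ (S.add_mem (P y₁).2 (P y₂).2),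
          hBadd _ (P y₁).2 _ (P y₂).2 _ (P x).2,
          hBsymm _ (P y₁).2 _ (P x).2, hBsymm _ (P y₂).2 _ (P x).2]; ring)
    (by intro c x y
        rw [map_smul]
        simp only [SetLike.val_smul]
        rw [hBsymm _ (P x).2 _ (S.smul_mem c (P y).2), hBsmul c _ (P y).2 _ (P x).2,
          hBsymm _ (P y).2 _ (P x).2]
        simp [smul_eq_mul]; ring) with hφ
  set T : E →ₗ[ℝ] E :=
    { toFun := fun x => (InnerProductSpace.toDual ℝ E).symm (LinearMap.toContinuousLinearMap (φ x))
      map_add' := by intro x y; rw [map_add, map_add, map_add]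
      map_smul' := by intro c x; rw [map_smul, map_smul, map_smulₛₗ]; simp } with hT
  refine ⟨LinearMap.toContinuousLinearMap T, ?_, ?_⟩
  · intro x y
    have hx : ⟪T x, y⟫ = φ x y := by
      simp only [hT, LinearMap.coe_mk, AddHom.coe_mk]
      rw [InnerProductSpace.toDual_symm_apply]
      simp
    have hy : ⟪T y, x⟫ = φ y x := by
      simp only [hT, LinearMap.coe_mk, AddHom.coe_mk]
      rw [InnerProductSpace.toDual_symm_apply]
      simp
    have hsym : φ x y = φ y x := by
      simp only [hφ, LinearMap.mk₂_apply]
      rw [hBsymm _ (P x).2 _ (P y).2]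
    rw [LinearMap.coe_toContinuousLinearMap' T]
    rw [hx, hsym, ← hy, real_inner_comm]
  · intro w hw
    have hPw : ((P w : S) : EuclideanSpace ℝ (Fin n)) = w :=
      Submodule.starProjection_eq_self_iff.mpr hw
    rw [LinearMap.coe_toContinuousLinearMap' T]
    have hx : ⟪T w, w⟫ = φ w w := by
      simp only [hT, LinearMap.coe_mk, AddHom.coe_mk]
      rw [InnerProductSpace.toDual_symm_apply]
      simp
    rw [real_inner_comm, hx]
    simp only [hφ, LinearMap.mk₂_apply, hPw]
    rw [hBdiag w hw]
    ring

set_option maxHeartbeats 1000000 in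
/-- If a sequence of generalized quadratic forms, uniformly bounded below by `−r‖·‖²` for
large `k`, epi-converges to `q`, then `q` is a generalized quadratic form and
`q(w) ≥ −r‖w‖²` for all `w`. -/
theorem epiLimit_of_genQuadForms_isGenQuadForm
    (q : ℕ → EuclideanSpace ℝ (Fin n) → EReal) (ql : EuclideanSpace ℝ (Fin n) → EReal)
    (hq : ∀ k, IsGenQuadForm (q k)) (hconv : EpiConverges q ql)
    (r : ℝ) (hr : 0 ≤ r)
    (hbd : ∀ᶠ k in atTop, ∀ w, ((-r * ‖w‖ ^ 2 : ℝ) : EReal) ≤ q k w) :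
    IsGenQuadForm ql ∧ ∀ w, ((-r * ‖w‖ ^ 2 : ℝ) : EReal) ≤ ql w := by
  classical
  -- per-k facts
  have hbot : ∀ k w, q k w ≠ ⊥ := by
    intro k w
    obtain ⟨A, L, hA, hin, hout⟩ := hq k
    by_cases hw : w ∈ L
    · rw [hin w hw]; exact EReal.coe_ne_bot _
    · rw [hout w hw]; simp
  have h0 : ∀ k, q k 0 = 0 := by
    intro k
    obtain ⟨A, L, hA, hin, hout⟩ := hq k
    rw [hin 0 L.zero_mem]
    norm_num
  have hom : ∀ k (c : ℝ), c ≠ 0 → ∀ w, q k (c • w) = ((c ^ 2 : ℝ) : EReal) * q k w := by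
    intro k c hc w
    have hc2 : (0:ℝ) < c ^ 2 := lt_of_le_of_ne (sq_nonneg c) (Ne.symm (pow_ne_zero 2 hc))
    obtain ⟨A, L, hA, hin, hout⟩ := hq k
    by_cases hw : w ∈ L
    · rw [hin _ hw, hin _ (L.smul_mem c hw), ← EReal.coe_mul, EReal.coe_eq_coe_iff]
      rw [map_smul, real_inner_smul_left, real_inner_smul_right]
      ring
    · have hcw : c • w ∉ L := fun h => hw (by
        have := L.smul_mem c⁻¹ h
        rwa [smul_smul, inv_mul_cancel₀ hc, one_smul] at this)
      rw [hout _ hw, hout _ hcw, EReal.coe_mul_top_of_pos hc2]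
  have par : ∀ k w z, q k (w + z) + q k (w - z)
      = ((2:ℝ) : EReal) * q k w + ((2:ℝ) : EReal) * q k z := by
    intro k
    obtain ⟨A, L, hA, hin, hout⟩ := hq k
    have hne : ∀ v, q k v ≠ ⊥ := hbot k
    have h2ne : ∀ v, ((2:ℝ) : EReal) * q k v ≠ ⊥ := by
      intro v
      by_cases hv : v ∈ L
      · rw [hin v hv, ← EReal.coe_mul]; exact EReal.coe_ne_bot _
      · rw [hout v hv, EReal.coe_mul_top_of_pos (by norm_num)]; simp
    have claim : ∀ w z, w ∉ L → q k (w + z) + q k (w - z)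
        = ((2:ℝ) : EReal) * q k w + ((2:ℝ) : EReal) * q k z := by
      intro w z hw
      have hL : w + z ∉ L ∨ w - z ∉ L := by
        by_contra h
        push_neg at h
        refine hw ?_
        have h5 := L.smul_mem (1/2 : ℝ) (L.add_mem h.1 h.2)
        have hid : (1/2 : ℝ) • ((w + z) + (w - z)) = w := by module
        rwa [hid] at h5
      have hRHS : ((2:ℝ) : EReal) * q k w + ((2:ℝ) : EReal) * q k z = ⊤ := by
        rw [hout w hw, EReal.coe_mul_top_of_pos (by norm_num),
          EReal.top_add_of_ne_bot (h2ne z)]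
      rw [hRHS]
      rcases hL with h | h
      · rw [hout _ h, EReal.top_add_of_ne_bot (hne _)]
      · rw [hout _ h, EReal.add_top_of_ne_bot (hne _)]
    intro w z
    by_cases hw : w ∈ L
    · by_cases hz : z ∈ L
      · rw [hin _ (L.add_mem hw hz), hin _ (L.sub_mem hw hz), hin _ hw, hin _ hz,
          ← EReal.coe_mul, ← EReal.coe_mul, ← EReal.coe_add, ← EReal.coe_add,
          EReal.coe_eq_coe_iff]
        simp only [map_add, map_sub, inner_add_left, inner_add_right, inner_sub_left,
          inner_sub_right]
        ring
      · have h5 := claim z w hz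
        have e1 : z + w = w + z := add_comm z w
        have e2 : q k (z - w) = q k (w - z) := by
          have h6 : z - w = (-1 : ℝ) • (w - z) := by module
          rw [h6, hom k (-1) (by norm_num)]
          norm_num
        rw [e1, e2] at h5
        rw [h5, add_comm]
    · exact claim w z hw
  -- recovery sequences
  have hrec : ∀ x, ∃ xs, Tendsto xs atTop (𝓝 x)
      ∧ Tendsto (fun k => q k (xs k)) atTop (𝓝 (ql x)) := by
    intro x
    obtain ⟨xs, hxs, hsup⟩ := hconv.2 x
    have hinf := hconv.1 x xs hxs
    have hle : liminf (fun k => q k (xs k)) atTop ≤ limsup (fun k => q k (xs k)) atTop :=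
      liminf_le_limsup
    exact ⟨xs, hxs, tendsto_of_liminf_eq_limsup (le_antisymm (hle.trans hsup) hinf)
      (le_antisymm hsup (hinf.trans hle))⟩
  -- lower bound
  have hlb : ∀ x, ((-r * ‖x‖ ^ 2 : ℝ) : EReal) ≤ ql x := by
    intro x
    obtain ⟨xs, hxs, htq⟩ := hrec x
    have h1 : Tendsto (fun k => ((-r * ‖xs k‖ ^ 2 : ℝ) : EReal)) atTop
        (𝓝 ((-r * ‖x‖ ^ 2 : ℝ) : EReal)) := by
      rw [EReal.tendsto_coe]
      exact (hxs.norm.pow 2).const_mul (-r)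
    have h2 : ∀ᶠ k in atTop, ((-r * ‖xs k‖ ^ 2 : ℝ) : EReal) ≤ q k (xs k) :=
      hbd.mono fun k hk => hk (xs k)
    exact le_of_tendsto_of_tendsto h1 htq h2
  have hqlbot : ∀ x, ql x ≠ ⊥ := by
    intro x h
    have := hlb x
    rw [h, le_bot_iff] at this
    exact EReal.coe_ne_bot _ this
  have hql0 : ql 0 = 0 := by
    refine le_antisymm ?_ ?_
    · have h5 := hconv.1 0 (fun _ => 0) tendsto_const_nhds
      simp only [h0] at h5
      rwa [liminf_const] at h5
    · have h5 := hlb 0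
      simpa using h5
  -- finite representation of convergent sequences
  have fin_seq : ∀ (u : ℕ → EReal) (a : ℝ), Tendsto u atTop (𝓝 (a : EReal)) →
      ∃ b : ℕ → ℝ, (∀ᶠ k in atTop, u k = ((b k : ℝ) : EReal)) ∧ Tendsto b atTop (𝓝 a) := by
    intro u a hu
    have h1 : ∀ᶠ k in atTop, u k < ⊤ := hu.eventually_lt_const (EReal.coe_lt_top a)
    have h2 : ∀ᶠ k in atTop, ⊥ < u k := hu.eventually_const_lt (EReal.bot_lt_coe a)
    refine ⟨fun k => (u k).toReal, ?_, ?_⟩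
    · filter_upwards [h1, h2] with k hk1 hk2
      exact (EReal.coe_toReal hk1.ne hk2.ne').symm
    · rw [← EReal.tendsto_coe]
      refine Tendsto.congr' ?_ hu
      filter_upwards [h1, h2] with k hk1 hk2
      exact (EReal.coe_toReal hk1.ne hk2.ne').symm
  -- homogeneity step
  have step : ∀ (c : ℝ), c ≠ 0 → ∀ x (a : ℝ), ql x = (a : EReal) →
      ql (c • x) ≤ ((c ^ 2 * a : ℝ) : EReal) := by
    intro c hc x a hx
    obtain ⟨xs, hxs, htq⟩ := hrec x
    rw [hx] at htq
    obtain ⟨b, hb, hbt⟩ := fin_seq _ a htq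
    have h1 := hconv.1 (c • x) (fun k => c • xs k) (hxs.const_smul c)
    have h2 : (fun k => q k (c • xs k)) =ᶠ[atTop] (fun k => ((c ^ 2 * b k : ℝ) : EReal)) := by
      filter_upwards [hb] with k hk
      rw [hom k c hc, hk, ← EReal.coe_mul]
    have h3 : Tendsto (fun k => ((c ^ 2 * b k : ℝ) : EReal)) atTop
        (𝓝 ((c ^ 2 * a : ℝ) : EReal)) := by
      rw [EReal.tendsto_coe]
      exact hbt.const_mul _
    have h4 : liminf (fun k => q k (c • xs k)) atTop = ((c ^ 2 * a : ℝ) : EReal) :=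
      (h3.congr' h2.symm).liminf_eq
    rw [← h4]
    exact h1
  have homql : ∀ (c : ℝ), c ≠ 0 → ∀ x, ql (c • x) = ((c ^ 2 : ℝ) : EReal) * ql x := by
    intro c hc x
    have hc2 : (0:ℝ) < c ^ 2 := lt_of_le_of_ne (sq_nonneg c) (Ne.symm (pow_ne_zero 2 hc))
    by_cases hx : ql x = ⊤
    · rw [hx, EReal.coe_mul_top_of_pos (by exact_mod_cast hc2)]
      by_contra h
      obtain ⟨a, ha⟩ : ∃ a : ℝ, ql (c • x) = (a : EReal) :=
        ⟨_, (EReal.coe_toReal h (hqlbot _)).symm⟩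
      have h5 := step c⁻¹ (inv_ne_zero hc) (c • x) a ha
      rw [smul_smul, inv_mul_cancel₀ hc, one_smul, hx] at h5
      exact (EReal.coe_lt_top _).not_ge h5
    · obtain ⟨a, ha⟩ : ∃ a : ℝ, ql x = (a : EReal) :=
        ⟨_, (EReal.coe_toReal hx (hqlbot _)).symm⟩
      have hle := step c hc x a ha
      have h1 : ql (c • x) ≠ ⊤ := by
        intro h
        rw [h] at hle
        exact (EReal.coe_lt_top _).not_ge hle
      obtain ⟨a', ha'⟩ : ∃ a' : ℝ, ql (c • x) = (a' : EReal) :=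
        ⟨_, (EReal.coe_toReal h1 (hqlbot _)).symm⟩
      have hge := step c⁻¹ (inv_ne_zero hc) (c • x) a' ha'
      rw [smul_smul, inv_mul_cancel₀ hc, one_smul, ha] at hge
      rw [ha', ha, ← EReal.coe_mul, EReal.coe_eq_coe_iff]
      have hle' : a' ≤ c ^ 2 * a := by
        rw [ha'] at hle
        exact_mod_cast hle
      have hge' : a ≤ (c⁻¹) ^ 2 * a' := by exact_mod_cast hge
      have e : c ^ 2 * ((c⁻¹) ^ 2 * a') = a' := by field_simp
      have h6 := mul_le_mul_of_nonneg_left hge' (le_of_lt hc2)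
      rw [e] at h6
      linarith
  -- parallelogram upper bound
  have parle : ∀ w z (a b : ℝ), ql w = (a : EReal) → ql z = (b : EReal) →
      ql (w + z) + ql (w - z) ≤ ((2 * a + 2 * b : ℝ) : EReal) := by
    intro w z a b hwa hzb
    obtain ⟨ws, hws, htw⟩ := hrec w
    rw [hwa] at htw
    obtain ⟨zs, hzs, htz⟩ := hrec z
    rw [hzb] at htz
    obtain ⟨u, hu, hut⟩ := fin_seq _ a htw
    obtain ⟨v, hv, hvt⟩ := fin_seq _ b htz
    have h1 := hconv.1 (w + z) (fun k => ws k + zs k) (hws.add hzs)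
    have h2 := hconv.1 (w - z) (fun k => ws k - zs k) (hws.sub hzs)
    have hsum : liminf (fun k => q k (ws k + zs k)) atTop
        + liminf (fun k => q k (ws k - zs k)) atTop
        ≤ liminf (fun k => q k (ws k + zs k) + q k (ws k - zs k)) atTop :=
      EReal.le_liminf_add
    have heq : (fun k => q k (ws k + zs k) + q k (ws k - zs k))
        =ᶠ[atTop] (fun k => ((2 * u k + 2 * v k : ℝ) : EReal)) := by
      filter_upwards [hu, hv] with k hk1 hk2
      rw [par k (ws k) (zs k), hk1, hk2, ← EReal.coe_mul, ← EReal.coe_mul, ← EReal.coe_add]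
    have h3 : Tendsto (fun k => ((2 * u k + 2 * v k : ℝ) : EReal)) atTop
        (𝓝 ((2 * a + 2 * b : ℝ) : EReal)) := by
      rw [EReal.tendsto_coe]
      exact (hut.const_mul 2).add (hvt.const_mul 2)
    have h4 : liminf (fun k => q k (ws k + zs k) + q k (ws k - zs k)) atTop
        = ((2 * a + 2 * b : ℝ) : EReal) := (h3.congr' heq.symm).liminf_eq
    calc ql (w + z) + ql (w - z)
        ≤ liminf (fun k => q k (ws k + zs k)) atTop
          + liminf (fun k => q k (ws k - zs k)) atTop := add_le_add h1 h2
      _ ≤ _ := hsum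
      _ = _ := h4
  have hrep : ∀ x, ql x ≠ ⊤ → ∃ a : ℝ, ql x = (a : EReal) := by
    intro x hx
    exact ⟨_, (EReal.coe_toReal hx (hqlbot _)).symm⟩
  -- the submodule
  set Lq : Submodule ℝ (EuclideanSpace ℝ (Fin n)) :=
    { carrier := {w | ql w ≠ ⊤}
      zero_mem' := by simp [Set.mem_setOf_eq, hql0]
      add_mem' := by
        intro x y hx hy
        simp only [Set.mem_setOf_eq] at hx hy ⊢
        obtain ⟨ax, hax⟩ := hrep x hx
        obtain ⟨ay, hay⟩ := hrep y hy
        have h5 := parle x y ax ay hax hay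
        intro htop
        rw [htop, EReal.top_add_of_ne_bot (hqlbot _)] at h5
        exact (EReal.coe_lt_top _).not_ge h5
      smul_mem' := by
        intro c x hx
        simp only [Set.mem_setOf_eq] at hx ⊢
        by_cases hc : c = 0
        · rw [hc, zero_smul, hql0]; simp
        · rw [homql c hc x]
          obtain ⟨a, ha⟩ := hrep x hx
          rw [ha, ← EReal.coe_mul]
          exact EReal.coe_ne_top _ } with hLq
  set Q : EuclideanSpace ℝ (Fin n) → ℝ := fun w => (ql w).toReal with hQ
  have hmem : ∀ w, w ∈ Lq ↔ ql w ≠ ⊤ := fun w => Iff.rfl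
  have hcoe : ∀ w ∈ Lq, ql w = ((Q w : ℝ) : EReal) := by
    intro w hw
    exact (EReal.coe_toReal ((hmem w).mp hw) (hqlbot w)).symm
  have hparQ : ∀ w ∈ Lq, ∀ z ∈ Lq, Q (w + z) + Q (w - z) = 2 * Q w + 2 * Q z := by
    intro w hw z hz
    have hwz : w + z ∈ Lq := Lq.add_mem hw hz
    have hwz' : w - z ∈ Lq := Lq.sub_mem hw hz
    have h1 := parle w z (Q w) (Q z) (hcoe w hw) (hcoe z hz)
    rw [hcoe _ hwz, hcoe _ hwz', ← EReal.coe_add] at h1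
    have h1' : Q (w + z) + Q (w - z) ≤ 2 * Q w + 2 * Q z := EReal.coe_le_coe_iff.mp h1
    have h2 := parle (w + z) (w - z) (Q (w + z)) (Q (w - z)) (hcoe _ hwz) (hcoe _ hwz')
    have e1 : (w + z) + (w - z) = (2:ℝ) • w := by module
    have e2 : (w + z) - (w - z) = (2:ℝ) • z := by module
    rw [e1, e2, homql 2 two_ne_zero, homql 2 two_ne_zero, hcoe w hw, hcoe z hz,
      ← EReal.coe_mul, ← EReal.coe_mul, ← EReal.coe_add] at h2
    have h2' : (2:ℝ) ^ 2 * Q w + (2:ℝ) ^ 2 * Q z ≤ 2 * Q (w + z) + 2 * Q (w - z) :=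
      EReal.coe_le_coe_iff.mp h2
    nlinarith [h1', h2']
  have hhomQ : ∀ (c : ℝ), ∀ w ∈ Lq, Q (c • w) = c ^ 2 * Q w := by
    intro c w hw
    by_cases hc : c = 0
    · rw [hc, zero_smul]
      simp only [hQ, hql0]
      norm_num
    · simp only [hQ]
      rw [homql c hc w, hcoe w hw, ← EReal.coe_mul, EReal.toReal_coe, EReal.toReal_coe]
  have hlbQ : ∀ w ∈ Lq, -r * ‖w‖ ^ 2 ≤ Q w := by
    intro w hw
    have := hlb w
    rw [hcoe w hw] at this
    exact EReal.coe_le_coe_iff.mp this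
  obtain ⟨A, hAsym, hAQ⟩ := quad_of_parallelogram Lq Q hparQ hhomQ r hr hlbQ
  refine ⟨⟨A, Lq, hAsym, ?_, ?_⟩, hlb⟩
  · intro w hw
    rw [hcoe w hw, EReal.coe_eq_coe_iff]
    exact hAQ w hw
  · intro w hw
    exact not_not.mp hw
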